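/- arXiv:1502.03791 — 3 statements merged into one kernel-verified Lean document; each statement's English description precedes it below -/
import Mathlib

section
/- Suppose X is a Banach space, X₁ and Z are closed subspaces of X, 0 < ε < 1, and P is a bounded linear projection from X onto X₁ with ‖Pz‖ ≤ ε‖z‖ for all z ∈ Z. Then there is a bounded linear projection Q from X₁ + Z onto X₁ such that Qz = 0 for all z ∈ Z (explicitly, Q = I − R⁻¹(I − P) where R = (I − P)|_Z, which is an isomorphism of Z onto W = (I − P)Z). -/
/-- An isomorphic embedding of Banach spaces: a bounded linear map which is
bounded below (hence an isomorphism onto its range). -/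
def IsIsomorphicEmbedding {Y X : Type*} [NormedAddCommGroup Y] [NormedSpace ℝ Y]
    [NormedAddCommGroup X] [NormedSpace ℝ X] (T : Y →L[ℝ] X) : Prop :=
  ∃ c : ℝ, 0 < c ∧ ∀ y : Y, c * ‖y‖ ≤ ‖T y‖

/-- `Y` embeds isomorphically into `X`. -/
def EmbedsInto (Y X : Type*) [NormedAddCommGroup Y] [NormedSpace ℝ Y]
    [NormedAddCommGroup X] [NormedSpace ℝ X] : Prop :=
  ∃ T : Y →L[ℝ] X, IsIsomorphicEmbedding T

/-- `X` is `K`-elastic: whenever a Banach space `Y` embeds isomorphically into `X`,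
there is an embedding `T : Y → X` with `‖y‖ ≤ ‖T y‖ ≤ K * ‖y‖` for all `y`. -/
def IsKElastic (X : Type*) [NormedAddCommGroup X] [NormedSpace ℝ X] (K : ℝ) : Prop :=
  ∀ (Y : Type) [NormedAddCommGroup Y] [NormedSpace ℝ Y] [CompleteSpace Y],
    EmbedsInto Y X → ∃ T : Y →L[ℝ] X, ∀ y : Y, ‖y‖ ≤ ‖T y‖ ∧ ‖T y‖ ≤ K * ‖y‖

/-- If `X₁`, `Z` are closed subspaces of a Banach space `X`, `0 < ε < 1`, and `P` is a
projection of `X` onto `X₁` with `‖P z‖ ≤ ε ‖z‖` on `Z`, then there is a (bounded linear)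
projection `Q` from `X₁ + Z` onto `X₁` vanishing on `Z`. -/
theorem projection_with_kernel_containing_Z
    (X : Type) [NormedAddCommGroup X] [NormedSpace ℝ X] [CompleteSpace X]
    (X₁ Z : Submodule ℝ X) (hX₁ : IsClosed (X₁ : Set X)) (hZ : IsClosed (Z : Set X))
    (ε : ℝ) (hε0 : 0 < ε) (hε1 : ε < 1)
    (P : X →L[ℝ] X) (hPmem : ∀ x : X, P x ∈ X₁) (hPfix : ∀ x ∈ X₁, P x = x)
    (hPZ : ∀ z ∈ Z, ‖P z‖ ≤ ε * ‖z‖) :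
    ∃ Q : ↥(X₁ ⊔ Z) →L[ℝ] X,
      (∀ u : ↥(X₁ ⊔ Z), (u : X) ∈ X₁ → Q u = (u : X)) ∧
      (∀ u : ↥(X₁ ⊔ Z), (u : X) ∈ Z → Q u = 0) ∧
      (∀ u : ↥(X₁ ⊔ Z), Q u ∈ X₁) := by
  set V := ↥(X₁ ⊔ Z)
  set A : Submodule ℝ V := X₁.comap (X₁ ⊔ Z).subtype
  set B : Submodule ℝ V := Z.comap (X₁ ⊔ Z).subtype
  -- X₁ ∩ Z = 0
  have hinter : ∀ x : X, x ∈ X₁ → x ∈ Z → x = 0 := by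
    intro x hx1 hxZ
    have h1 : P x = x := hPfix x hx1
    have h2 : ‖P x‖ ≤ ε * ‖x‖ := hPZ x hxZ
    rw [h1] at h2
    by_contra hne
    have hx : 0 < ‖x‖ := norm_pos_iff.2 hne
    nlinarith
  have hcompl : IsCompl A B := by
    constructor
    · rw [Submodule.disjoint_def]
      intro u huA huB
      exact Subtype.ext (hinter _ huA huB)
    · rw [codisjoint_iff, eq_top_iff]
      intro u _
      obtain ⟨x, hx, z, hz, hxz⟩ := Submodule.mem_sup.1 u.2
      have hxmem : x ∈ X₁ ⊔ Z := Submodule.mem_sup_left hx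
      have hzmem : z ∈ X₁ ⊔ Z := Submodule.mem_sup_right hz
      have : u = (⟨x, hxmem⟩ : V) + ⟨z, hzmem⟩ := by
        apply Subtype.ext; exact hxz.symm
      rw [this]
      exact Submodule.add_mem_sup (show (⟨x, hxmem⟩ : V) ∈ A from hx)
        (show (⟨z, hzmem⟩ : V) ∈ B from hz)
  set π := A.linearProjOfIsCompl B hcompl
  set L : V →ₗ[ℝ] X := (X₁ ⊔ Z).subtype ∘ₗ A.subtype ∘ₗ π with hL
  have hLx1 : ∀ u : V, L u ∈ X₁ := fun u => (π u).2
  have hLfix : ∀ u : V, (u : X) ∈ X₁ → L u = (u : X) := by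
    intro u hu
    have : π u = ⟨u, hu⟩ := Submodule.linearProjOfIsCompl_apply_left hcompl ⟨u, hu⟩
    simp [hL, this]
  have hLzero : ∀ u : V, (u : X) ∈ Z → L u = 0 := by
    intro u hu
    have : π u = 0 := Submodule.linearProjOfIsCompl_apply_right' hcompl (x := u) hu
    simp [hL, this]
  -- key inequality
  have hPnorm : (0:ℝ) ≤ ‖P‖ := norm_nonneg P
  set C : ℝ := 1 + (1 + ‖P‖) / (1 - ε) with hC
  have h1ε : (0:ℝ) < 1 - ε := by linarith
  have hkey : ∀ x ∈ X₁, ∀ z ∈ Z, ‖x‖ ≤ C * ‖x + z‖ := by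
    intro x hx z hz
    have hPx : P x = x := hPfix x hx
    have hPzle : ‖P z‖ ≤ ε * ‖z‖ := hPZ z hz
    have h1 : (x + z) - P (x + z) = z - P z := by
      rw [map_add, hPx]; abel
    have h2 : ‖z‖ - ε * ‖z‖ ≤ ‖z - P z‖ := by
      have := norm_sub_norm_le z (P z)
      linarith
    have h3 : ‖z - P z‖ ≤ (1 + ‖P‖) * ‖x + z‖ := by
      rw [← h1]
      calc ‖(x + z) - P (x + z)‖ ≤ ‖x + z‖ + ‖P (x + z)‖ := norm_sub_le _ _
        _ ≤ ‖x + z‖ + ‖P‖ * ‖x + z‖ := by linarith [P.le_opNorm (x + z)]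
        _ = (1 + ‖P‖) * ‖x + z‖ := by ring
    have hzle : ‖z‖ ≤ (1 + ‖P‖) / (1 - ε) * ‖x + z‖ := by
      rw [div_mul_eq_mul_div, le_div_iff₀ h1ε]
      nlinarith
    have hxle : ‖x‖ ≤ ‖x + z‖ + ‖z‖ := by
      calc ‖x‖ = ‖(x + z) - z‖ := by rw [add_sub_cancel_right]
        _ ≤ ‖x + z‖ + ‖z‖ := norm_sub_le _ _
    calc ‖x‖ ≤ ‖x + z‖ + ‖z‖ := hxle
      _ ≤ ‖x + z‖ + (1 + ‖P‖) / (1 - ε) * ‖x + z‖ := by linarith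
      _ = C * ‖x + z‖ := by ring
  have hbound : ∀ u : V, ‖L u‖ ≤ C * ‖u‖ := by
    intro u
    have hmemZ : (u : X) - L u ∈ Z := by
      have : u - (⟨L u, (π u).1.2⟩ : V) ∈ B := by
        have h0 : π (u - ⟨L u, (π u).1.2⟩) = 0 := by
          have hπL : π (⟨L u, (π u).1.2⟩ : V) = π u := by
            have : (⟨L u, (π u).1.2⟩ : V) = ((π u : A) : V) := rfl
            rw [this]
            exact Submodule.linearProjOfIsCompl_apply_left hcompl (π u)
          rw [map_sub, hπL, sub_self]
        exact (Submodule.linearProjOfIsCompl_apply_eq_zero_iff hcompl).1 h0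
      exact this
    have := hkey (L u) (hLx1 u) ((u : X) - L u) hmemZ
    have h' : ‖L u‖ ≤ C * ‖(u : X)‖ := by simpa using this
    exact h'
  refine ⟨L.mkContinuous C hbound, ?_, ?_, ?_⟩
  · intro u hu; simpa [LinearMap.mkContinuous_apply] using hLfix u hu
  · intro u hu; simpa [LinearMap.mkContinuous_apply] using hLzero u hu
  · intro u; simpa [LinearMap.mkContinuous_apply] using hLx1 u
end

section
/- Let Z be a Banach space with a normalized 1-unconditional Schauder basis (z_n), let X and Y_n, n ∈ ℕ, be separable Banach spaces, and let C, D > 0. Suppose 𝒯 is a (∑ Y_n)_Z-tree in X with constants C, D whose order is ω₁. Then X contains a subspace which is D-isomorphic to (∑ Y_n)_Z, i.e., there is an isomorphism U of (∑ Y_n)_Z onto a subspace of X with ‖U‖·‖U⁻¹‖ ≤ D. -/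
/-- A normalized `1`-unconditional (Schauder) basis `(z n)` of a Banach space `Z`:
every vector has a unique (unconditionally convergent) expansion `∑ a n • z n`, each
`z n` has norm one, and the basis is `1`-unconditional in the sense that making the
coefficients smaller in absolute value does not increase the norm of the sum. -/
structure NormalizedUncondBasis (Z : Type*) [NormedAddCommGroup Z] [NormedSpace ℝ Z] where
  z : ℕ → Z
  norm_one : ∀ n, ‖z n‖ = 1
  repr : ∀ x : Z, ∃! a : ℕ → ℝ, HasSum (fun n => a n • z n) x
  uncond : ∀ a b : ℕ → ℝ, (∀ n, |a n| ≤ |b n|) → Summable (fun n => b n • z n) →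
    Summable (fun n => a n • z n) ∧ ‖∑' n, a n • z n‖ ≤ ‖∑' n, b n • z n‖

/-- The `Z`-sum `(∑ Y n)_Z` of the spaces `Y n` with respect to the `1`-unconditional
basis `(z n)` of `Z`: all sequences `(y n)`, `y n ∈ Y n`, such that `∑ ‖y n‖ • z n`
converges in `Z`; it is normed by `‖(y n)‖ = ‖∑ ‖y n‖ • z n‖` (see `zsumNorm`). -/
noncomputable def zsum {Z : Type*} [NormedAddCommGroup Z] [NormedSpace ℝ Z]
    (B : NormalizedUncondBasis Z)
    (Y : ℕ → Type*) [∀ n, NormedAddCommGroup (Y n)] [∀ n, NormedSpace ℝ (Y n)] :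
    Submodule ℝ (∀ n, Y n) where
  carrier := {y | Summable (fun n => ‖y n‖ • B.z n)}
  zero_mem' := by
    simp only [Set.mem_setOf_eq, Pi.zero_apply, norm_zero, zero_smul]
    exact summable_zero
  add_mem' := by
    intro a b ha hb
    have hs : Summable (fun n => (‖a n‖ + ‖b n‖) • B.z n) := by
      simpa [add_smul] using ha.add hb
    refine (B.uncond _ _ (fun n => ?_) hs).1
    rw [abs_of_nonneg (norm_nonneg _), abs_of_nonneg (by positivity)]
    exact norm_add_le _ _
  smul_mem' := by
    intro c y hy
    have h : (fun n => ‖(c • y) n‖ • B.z n) = fun n => |c| • (‖y n‖ • B.z n) := by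
      funext n
      simp [norm_smul, mul_smul, Real.norm_eq_abs]
    rw [Set.mem_setOf_eq, h]
    exact hy.const_smul |c|

/-- The norm of an element of the `Z`-sum `(∑ Y n)_Z`. -/
noncomputable def zsumNorm {Z : Type*} [NormedAddCommGroup Z] [NormedSpace ℝ Z]
    (B : NormalizedUncondBasis Z)
    {Y : ℕ → Type*} [∀ n, NormedAddCommGroup (Y n)] [∀ n, NormedSpace ℝ (Y n)]
    (y : ↥(zsum B Y)) : ℝ :=
  ‖∑' n, ‖(y : ∀ n, Y n) n‖ • B.z n‖

/-- A node of a `(∑ Y n)_Z`-tree in `X`: a finite tuple `((X₁,T₁),…,(X_k,T_k))` where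
`X_j` is a subspace of `X` and `T_j` is an isomorphism of `X_j` onto `Y_j`. -/
def TreeNode (X : Type*) [NormedAddCommGroup X] [NormedSpace ℝ X]
    (Y : ℕ → Type*) [∀ n, NormedAddCommGroup (Y n)] [∀ n, NormedSpace ℝ (Y n)] :=
  Σ k : ℕ, ∀ j : Fin k, Σ V : Submodule ℝ X, (↥V ≃L[ℝ] Y j)

/-- The extension partial order on nodes: `a ≤ b` iff `b` extends the tuple `a`. -/
def NodeLE {X : Type*} [NormedAddCommGroup X] [NormedSpace ℝ X]
    {Y : ℕ → Type*} [∀ n, NormedAddCommGroup (Y n)] [∀ n, NormedSpace ℝ (Y n)]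
    (a b : TreeNode X Y) : Prop :=
  ∃ h : a.1 ≤ b.1, ∀ j : Fin a.1, b.2 (Fin.castLE h j) = a.2 j

/-- The derivation of a tree: delete all nodes with no proper extension in the tree. -/
def derivOne {X : Type*} [NormedAddCommGroup X] [NormedSpace ℝ X]
    {Y : ℕ → Type*} [∀ n, NormedAddCommGroup (Y n)] [∀ n, NormedSpace ℝ (Y n)]
    (T : Set (TreeNode X Y)) : Set (TreeNode X Y) :=
  {a ∈ T | ∃ b ∈ T, NodeLE a b ∧ a ≠ b}

/-- Transfinite iteration of the derivation `T ↦ T⁽¹⁾`, with intersections at limits. -/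
noncomputable def derivIter {X : Type*} [NormedAddCommGroup X] [NormedSpace ℝ X]
    {Y : ℕ → Type*} [∀ n, NormedAddCommGroup (Y n)] [∀ n, NormedSpace ℝ (Y n)]
    (T : Set (TreeNode X Y)) (o : Ordinal) : Set (TreeNode X Y) :=
  Ordinal.limitRecOn o T (fun _ S => derivOne S)
    (fun o _ ih => ⋂ p : {p : Ordinal // p < o}, ih p.1 p.2)

/-- The conditions on the nodes of a `(∑ Y n)_Z`-tree in `X` with constants `C`, `D`:
each `X_j` is closed, `‖T_j‖ ≤ C`, `‖T_j⁻¹‖ ≤ 1`, and for all `x_j ∈ X_j`,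
`‖∑ x_j‖ ≤ ‖(T_j x_j)_j‖_Z ≤ D ‖∑ x_j‖`. -/
def GoodNode {Z : Type*} [NormedAddCommGroup Z] [NormedSpace ℝ Z]
    (B : NormalizedUncondBasis Z) {X : Type*} [NormedAddCommGroup X] [NormedSpace ℝ X]
    {Y : ℕ → Type*} [∀ n, NormedAddCommGroup (Y n)] [∀ n, NormedSpace ℝ (Y n)]
    (C D : ℝ) (a : TreeNode X Y) : Prop :=
  (∀ j : Fin a.1, IsClosed ((a.2 j).1 : Set X) ∧
      ‖((a.2 j).2 : ↥(a.2 j).1 →L[ℝ] Y j)‖ ≤ C ∧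
      ‖((a.2 j).2.symm : Y j →L[ℝ] ↥(a.2 j).1)‖ ≤ 1) ∧
  ∀ x : ∀ j : Fin a.1, ↥(a.2 j).1,
    ‖∑ j, ((x j : X))‖ ≤ ‖∑ j, ‖(a.2 j).2 (x j)‖ • B.z j‖ ∧
    ‖∑ j, ‖(a.2 j).2 (x j)‖ • B.z j‖ ≤ D * ‖∑ j, ((x j : X))‖

namespace ZsumAux
open Filter Topology
universe u




def gOne {γ : Type*} (le : γ → γ → Prop) (A : Set γ) : Set γ :=
  {a ∈ A | ∃ b ∈ A, le a b ∧ a ≠ b}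

noncomputable def gIter {γ : Type*} (le : γ → γ → Prop) (A : Set γ) (o : Ordinal.{u}) : Set γ :=
  Ordinal.limitRecOn o A (fun _ S => gOne le S)
    (fun o _ ih => ⋂ p : {p : Ordinal // p < o}, ih p.1 p.2)

variable {γ δ : Type*} (le : γ → γ → Prop) (A : Set γ)

@[simp] lemma gIter_zero : gIter le A 0 = A := Ordinal.limitRecOn_zero ..

@[simp] lemma gIter_succ (o : Ordinal.{u}) :
    gIter le A (Order.succ o) = gOne le (gIter le A o) := Ordinal.limitRecOn_succ ..

lemma gIter_limit {o : Ordinal.{u}} (h : Order.IsSuccLimit o) :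
    gIter le A o = ⋂ p : {p : Ordinal // p < o}, gIter le A p.1 :=
  Ordinal.limitRecOn_limit _ _ _ _ h

lemma gOne_subset : gOne le A ⊆ A := fun _ ha => ha.1

lemma gIter_antitone : ∀ {o₂ o₁ : Ordinal.{u}}, o₁ ≤ o₂ → gIter le A o₂ ⊆ gIter le A o₁ := by
  intro o₂
  induction o₂ using Ordinal.induction with
  | h o IH =>
    intro o₁ h
    rcases eq_or_lt_of_le h with rfl | hlt
    · exact subset_rfl
    rcases Ordinal.zero_or_succ_or_isSuccLimit o with rfl | ⟨p, rfl⟩ | hl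
    · exact absurd hlt (not_lt_zero (a := o₁))
    · rw [gIter_succ]
      exact (gOne_subset _ _).trans (IH p (Order.lt_succ p) (Order.lt_succ_iff.mp hlt))
    · rw [gIter_limit le A hl]
      exact Set.iInter_subset (fun p : {p : Ordinal.{u} // p < o} => gIter le A p.1) ⟨o₁, hlt⟩

lemma gIter_image (le' : δ → δ → Prop) (ψ : γ → δ)
    (hmono : ∀ a b, le a b → le' (ψ a) (ψ b))
    (hne : ∀ a b, le a b → a ≠ b → ψ a ≠ ψ b) :
    ∀ o : Ordinal.{u}, ψ '' gIter le A o ⊆ gIter le' (ψ '' A) o := by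
  intro o
  induction o using Ordinal.induction with
  | h o IH =>
    rcases Ordinal.zero_or_succ_or_isSuccLimit o with rfl | ⟨p, rfl⟩ | hl
    · simp
    · rw [gIter_succ, gIter_succ]
      rintro _ ⟨a, ⟨haS, b, hbS, hab, hne'⟩, rfl⟩
      exact ⟨IH p (Order.lt_succ p) ⟨a, haS, rfl⟩, ψ b, IH p (Order.lt_succ p) ⟨b, hbS, rfl⟩,
        hmono _ _ hab, hne _ _ hab hne'⟩
    · rw [gIter_limit _ _ hl, gIter_limit _ _ hl]
      rintro _ ⟨a, ha, rfl⟩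
      exact Set.mem_iInter.2 fun p => IH p.1 p.2 ⟨a, Set.mem_iInter.1 ha p, rfl⟩

lemma not_countable_ordinals :
    ¬ Countable {o : Ordinal.{u} // o.card ≤ Cardinal.aleph0} := by
  intro hcnt
  have he : {o : Ordinal.{u} // o.card ≤ Cardinal.aleph0} ≃
      (Set.Iio ((Cardinal.aleph 1).ord : Ordinal.{u})) :=
    Equiv.subtypeEquivRight (fun o => by
      rw [Set.mem_Iio, Cardinal.lt_ord, ← Cardinal.succ_aleph0, Order.lt_succ_iff])
  have : Countable (Set.Iio ((Cardinal.aleph 1).ord : Ordinal.{u})) := Countable.of_equiv _ he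
  have hle : Cardinal.mk (Set.Iio ((Cardinal.aleph 1).ord : Ordinal.{u})) ≤ Cardinal.aleph0 :=
    Cardinal.mk_le_aleph0
  rw [Ordinal.mk_Iio_ordinal, Cardinal.card_ord] at hle
  exact absurd hle (not_le.2 (Cardinal.aleph0_lt_lift.2 Cardinal.aleph0_lt_aleph_one))

lemma gIter_stab {δ : Type} [Countable δ] (le' : δ → δ → Prop) (A : Set δ) :
    ∃ o : Ordinal.{u}, o.card ≤ Cardinal.aleph0 ∧
      gIter le' A (Order.succ o) = gIter le' A o := by
  by_contra hcon
  push_neg at hcon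
  have hdiff : ∀ o : {o : Ordinal.{u} // o.card ≤ Cardinal.aleph0},
      ∃ c, c ∈ gIter le' A o.1 ∧ c ∉ gIter le' A (Order.succ o.1) := by
    intro o
    have h1 : gIter le' A (Order.succ o.1) ⊆ gIter le' A o.1 :=
      gIter_antitone _ _ (Order.le_succ _)
    obtain ⟨c, hc1, hc2⟩ := Set.exists_of_ssubset (h1.ssubset_of_ne (hcon o.1 o.2))
    exact ⟨c, hc1, hc2⟩
  choose x hx1 hx2 using hdiff
  have hinj : Function.Injective x := by
    intro o o' h
    by_contra hne
    have hne' : o.1 ≠ o'.1 := fun e => hne (Subtype.ext e)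
    rcases hne'.lt_or_gt with hlt | hlt
    · exact hx2 o (gIter_antitone le' A (Order.succ_le_of_lt hlt) (h ▸ hx1 o'))
    · exact hx2 o' (gIter_antitone le' A (Order.succ_le_of_lt hlt) (h ▸ hx1 o))
  exact not_countable_ordinals hinj.countable


def Code : Type := Σ k : ℕ, ∀ ℓ : Fin k, Fin (ℓ.1+1) → Fin (ℓ.1+1) → ℕ

instance : Countable Code := by unfold Code; infer_instance

def CodeLE (c d : Code) : Prop :=
  ∃ h : c.1 ≤ d.1, ∀ ℓ : Fin c.1, d.2 (Fin.castLE h ℓ) = c.2 ℓ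

lemma CodeLE.rfl (c : Code) : CodeLE c c := ⟨le_refl _, fun _ => _root_.rfl⟩

lemma CodeLE.trans {a b c : Code} (h1 : CodeLE a b) (h2 : CodeLE b c) : CodeLE a c := by
  obtain ⟨hab, eab⟩ := h1; obtain ⟨hbc, ebc⟩ := h2
  refine ⟨hab.trans hbc, fun ℓ => ?_⟩
  have h := ebc (Fin.castLE hab ℓ)
  exact (show c.2 (Fin.castLE (hab.trans hbc) ℓ) = b.2 (Fin.castLE hab ℓ) from h).trans (eab ℓ)

lemma CodeLE.eq_of_len : ∀ {a b : Code}, CodeLE a b → a.1 = b.1 → a = b := by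
  rintro ⟨k, f⟩ ⟨k', g⟩ ⟨hle, he⟩ hl
  have hl' : k = k' := hl
  subst hl'
  have hfg : f = g := by funext ℓ; exact (he ℓ).symm
  subst hfg
  rfl

section Tree

variable {X : Type} [NormedAddCommGroup X] [NormedSpace ℝ X]
variable {Y : ℕ → Type} [∀ n, NormedAddCommGroup (Y n)] [∀ n, NormedSpace ℝ (Y n)]

lemma NodeLE.eq_of_len : ∀ {a b : TreeNode X Y}, NodeLE a b → a.1 = b.1 → a = b := by
  rintro ⟨k, f⟩ ⟨k', g⟩ ⟨hle, he⟩ hl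
  have hl' : k = k' := hl
  subst hl'
  have hfg : f = g := by funext j; exact (he j).symm
  subst hfg
  rfl

lemma derivIter_eq_gIter (T : Set (TreeNode X Y)) :
    ∀ o : Ordinal.{u}, derivIter T o = gIter NodeLE T o := by
  intro o
  induction o using Ordinal.induction with
  | h o IH =>
    rcases Ordinal.zero_or_succ_or_isSuccLimit o with rfl | ⟨p, rfl⟩ | hl
    · rw [gIter_zero]
      exact Ordinal.limitRecOn_zero ..
    · rw [gIter_succ]
      rw [show derivIter T (Order.succ p) = derivOne (derivIter T p) from
        Ordinal.limitRecOn_succ ..]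
      rw [IH p (Order.lt_succ p)]
      rfl
    · rw [gIter_limit _ _ hl]
      rw [show derivIter T o = ⋂ p : {p : Ordinal // p < o}, derivIter T p.1 from
        Ordinal.limitRecOn_limit _ _ _ _ hl]
      exact Set.iInter_congr fun p => IH p.1 p.2

/-- The operator `Y j → X` determined by the `j`-th component of a node (or `0`). -/
noncomputable def nodeOp (a : TreeNode X Y) (j : ℕ) : Y j →L[ℝ] X :=
  if h : j < a.1 then
    ((a.2 ⟨j, h⟩).1.subtypeL).comp
      (((a.2 ⟨j, h⟩).2.symm : Y j →L[ℝ] ↥(a.2 ⟨j, h⟩).1))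
  else 0

lemma nodeOp_apply (a : TreeNode X Y) {j : ℕ} (h : j < a.1) (y : Y j) :
    nodeOp a j y = (((a.2 ⟨j, h⟩).2.symm y : ↥(a.2 ⟨j, h⟩).1) : X) := by
  rw [nodeOp, dif_pos h]; rfl

lemma nodeOp_of_le {a b : TreeNode X Y} (h : NodeLE a b) {j : ℕ} (hj : j < a.1) :
    nodeOp b j = nodeOp a j := by
  obtain ⟨hk, he⟩ := h
  have hj' : j < b.1 := lt_of_lt_of_le hj hk
  rw [nodeOp, nodeOp, dif_pos hj, dif_pos hj']
  rw [show (b.2 ⟨j, hj'⟩) = a.2 ⟨j, hj⟩ from he ⟨j, hj⟩]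

/-- The countable code of a node, relative to an approximation scheme `φ` on `X` and
dense sequences `q` in the `Y n`. -/
noncomputable def codeOf (φ : X → ℕ → ℕ) (q : ∀ n, ℕ → Y n) (a : TreeNode X Y) : Code :=
  ⟨a.1, fun ℓ j i => φ (nodeOp a ↑j (q ↑j ↑i)) ↑ℓ⟩

lemma codeOf_mono (φ : X → ℕ → ℕ) (q : ∀ n, ℕ → Y n) {a b : TreeNode X Y}
    (h : NodeLE a b) : CodeLE (codeOf φ q a) (codeOf φ q b) := by
  obtain ⟨hk, he⟩ := h
  refine ⟨hk, fun ℓ => ?_⟩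
  funext j i
  show φ (nodeOp b ↑j (q ↑j ↑i)) ↑ℓ = φ (nodeOp a ↑j (q ↑j ↑i)) ↑ℓ
  rw [nodeOp_of_le ⟨hk, he⟩ (lt_of_le_of_lt (Nat.lt_succ_iff.mp j.2) ℓ.2)]

lemma codeOf_ne (φ : X → ℕ → ℕ) (q : ∀ n, ℕ → Y n) {a b : TreeNode X Y}
    (h : NodeLE a b) (hne : a ≠ b) : codeOf φ q a ≠ codeOf φ q b := by
  intro he
  have h1 : (codeOf φ q a).1 = (codeOf φ q b).1 := congrArg Sigma.fst he
  exact hne (NodeLE.eq_of_len h h1)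

lemma codeOf_len_lt (φ : X → ℕ → ℕ) (q : ∀ n, ℕ → Y n) {a b : TreeNode X Y}
    (hle : CodeLE (codeOf φ q a) (codeOf φ q b)) (hne : codeOf φ q a ≠ codeOf φ q b) :
    a.1 < b.1 := by
  rcases lt_or_eq_of_le hle.1 with h | h
  · exact h
  · exact absurd (CodeLE.eq_of_len hle h) hne

end Tree

end ZsumAux

namespace ZsumAux
section Analytic

open Filter Topology

variable {Z : Type} [NormedAddCommGroup Z] [NormedSpace ℝ Z]
variable {X : Type} [NormedAddCommGroup X] [NormedSpace ℝ X]
variable {Y : ℕ → Type} [∀ n, NormedAddCommGroup (Y n)] [∀ n, NormedSpace ℝ (Y n)]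

lemma nodeOp_norm {B : NormalizedUncondBasis Z} {C D : ℝ} {a : TreeNode X Y}
    (hg : GoodNode B C D a) (j : ℕ) (y : Y j) : ‖nodeOp a j y‖ ≤ ‖y‖ := by
  rw [nodeOp]
  split_ifs with h
  · have h1 := (hg.1 ⟨j, h⟩).2.2
    have h2 : (((a.2 ⟨j, h⟩).1.subtypeL).comp
        (((a.2 ⟨j, h⟩).2.symm : Y j →L[ℝ] ↥(a.2 ⟨j, h⟩).1))) y
        = ((((a.2 ⟨j, h⟩).2.symm : Y j →L[ℝ] ↥(a.2 ⟨j, h⟩).1)) y : X) := rfl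
    rw [h2]
    have h3 : ‖((((a.2 ⟨j, h⟩).2.symm : Y j →L[ℝ] ↥(a.2 ⟨j, h⟩).1)) y : X)‖
        = ‖(((a.2 ⟨j, h⟩).2.symm : Y j →L[ℝ] ↥(a.2 ⟨j, h⟩).1)) y‖ := rfl
    rw [h3]
    calc ‖(((a.2 ⟨j, h⟩).2.symm : Y j →L[ℝ] ↥(a.2 ⟨j, h⟩).1)) y‖
        ≤ ‖((a.2 ⟨j, h⟩).2.symm : Y j →L[ℝ] ↥(a.2 ⟨j, h⟩).1)‖ * ‖y‖ :=
          ContinuousLinearMap.le_opNorm _ y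
      _ ≤ 1 * ‖y‖ := mul_le_mul_of_nonneg_right h1 (norm_nonneg y)
      _ = ‖y‖ := one_mul _
  · simp

lemma nodeOp_sum {B : NormalizedUncondBasis Z} {C D : ℝ} {a : TreeNode X Y}
    (hg : GoodNode B C D a) (F : Finset ℕ) (hF : ∀ j ∈ F, j < a.1) (y : ∀ n, Y n) :
    ‖∑ j ∈ F, nodeOp a j (y j)‖ ≤ ‖∑ j ∈ F, ‖y j‖ • B.z j‖ ∧
      ‖∑ j ∈ F, ‖y j‖ • B.z j‖ ≤ D * ‖∑ j ∈ F, nodeOp a j (y j)‖ := by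
  classical
  have hsub : F ⊆ Finset.range a.1 := fun j hj => Finset.mem_range.mpr (hF j hj)
  set x : ∀ j : Fin a.1, ↥(a.2 j).1 :=
    fun j => if hj : (j : ℕ) ∈ F then (a.2 j).2.symm (y j) else 0 with hx
  have h1 : ∑ j : Fin a.1, ((x j : X)) = ∑ j ∈ F, nodeOp a j (y j) := by
    have e1 : ∀ j : Fin a.1, ((x j : X)) =
        (fun n => if n ∈ F then nodeOp a n (y n) else 0) (j : ℕ) := by
      intro j
      by_cases hj : (j : ℕ) ∈ F
      · simp only [hx, hj, dif_pos, if_pos]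
        rw [nodeOp_apply a j.2]
      · simp [hx, hj]
    rw [Finset.sum_congr rfl (fun j _ => e1 j),
      Fin.sum_univ_eq_sum_range (fun n => if n ∈ F then nodeOp a n (y n) else 0) a.1,
      Finset.sum_ite_mem, Finset.inter_eq_right.mpr hsub]
  have h2 : ∑ j : Fin a.1, ‖(a.2 j).2 (x j)‖ • B.z j = ∑ j ∈ F, ‖y j‖ • B.z j := by
    have e2 : ∀ j : Fin a.1, ‖(a.2 j).2 (x j)‖ • B.z j =
        (fun n => if n ∈ F then ‖y n‖ • B.z n else 0) (j : ℕ) := by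
      intro j
      by_cases hj : (j : ℕ) ∈ F
      · simp only [hx, hj, dif_pos, if_pos]
        rw [ContinuousLinearEquiv.apply_symm_apply]
      · simp [hx, hj]
    rw [Finset.sum_congr rfl (fun j _ => e2 j),
      Fin.sum_univ_eq_sum_range (fun n => if n ∈ F then ‖y n‖ • B.z n else 0) a.1,
      Finset.sum_ite_mem, Finset.inter_eq_right.mpr hsub]
  obtain ⟨ha, hb⟩ := hg.2 x
  rw [h1, h2] at ha hb
  exact ⟨ha, hb⟩

lemma lim_exists {E : Type} [NormedAddCommGroup E] [NormedSpace ℝ E]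
    [CompleteSpace X]
    (f : ℕ → E →L[ℝ] X) (hb : ∀ m y, ‖f m y‖ ≤ ‖y‖)
    (q : ℕ → E) (hq : DenseRange q)
    (hc : ∀ i, CauchySeq fun m => f m (q i)) :
    ∃ S : E →ₗ[ℝ] X, ∀ y, Tendsto (fun m => f m y) atTop (𝓝 (S y)) := by
  have hcy : ∀ y : E, CauchySeq fun m => f m y := by
    intro y
    rw [Metric.cauchySeq_iff]
    intro ε hε
    have h4 : (0:ℝ) < ε/4 := by linarith
    obtain ⟨i, hi⟩ := hq.exists_dist_lt y h4
    obtain ⟨N, hN⟩ := Metric.cauchySeq_iff.mp (hc i) (ε/4) h4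
    refine ⟨N, fun m hm n hn => ?_⟩
    have d1 : dist (f m y) (f m (q i)) ≤ dist y (q i) := by
      rw [dist_eq_norm, dist_eq_norm, ← map_sub]
      exact hb m _
    have d2 : dist (f n (q i)) (f n y) ≤ dist (q i) y := by
      rw [dist_eq_norm, dist_eq_norm, ← map_sub]
      exact hb n _
    have d3 := hN m hm n hn
    have := dist_triangle4 (f m y) (f m (q i)) (f n (q i)) (f n y)
    rw [dist_comm (q i) y] at d2
    linarith
  choose g hg using fun y => cauchySeq_tendsto_of_complete (hcy y)
  refine ⟨{ toFun := g, map_add' := ?_, map_smul' := ?_ }, hg⟩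
  · intro y y'
    have h1 := hg (y + y')
    have h2 := (hg y).add (hg y')
    have he : (fun m => f m y + f m y') = fun m => f m (y + y') := by
      funext m; rw [← map_add]
    rw [he] at h2
    exact tendsto_nhds_unique h1 h2
  · intro c y
    have h1 := hg (c • y)
    have h2 := (hg y).const_smul c
    have he : (fun m => c • f m y) = fun m => f m (c • y) := by
      funext m; rw [← map_smul]
    rw [he] at h2
    exact tendsto_nhds_unique h1 h2

lemma branch_embeds [CompleteSpace Z] [CompleteSpace X] (B : NormalizedUncondBasis Z)
    {D : ℝ} (hD : 0 < D) (S : ∀ n, Y n →ₗ[ℝ] X)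
    (hS : ∀ (F : Finset ℕ) (y : ∀ n, Y n),
      ‖∑ j ∈ F, S j (y j)‖ ≤ ‖∑ j ∈ F, ‖y j‖ • B.z j‖ ∧
      ‖∑ j ∈ F, ‖y j‖ • B.z j‖ ≤ D * ‖∑ j ∈ F, S j (y j)‖) :
    ∃ (U : ↥(zsum B Y) →ₗ[ℝ] X) (c : ℝ), 0 < c ∧
      ∀ y : ↥(zsum B Y),
        c * zsumNorm B y ≤ ‖U y‖ ∧ ‖U y‖ ≤ D * c * zsumNorm B y := by
  have hsum : ∀ y : ↥(zsum B Y), Summable fun n => S n ((y : ∀ n, Y n) n) := by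
    intro y
    rw [summable_iff_vanishing]
    intro e he
    obtain ⟨ε, hε, hball⟩ := Metric.mem_nhds_iff.mp he
    have hy : Summable fun n => ‖(y : ∀ n, Y n) n‖ • B.z n := y.2
    obtain ⟨s, hs⟩ := summable_iff_vanishing.mp hy (Metric.ball 0 ε)
      (Metric.ball_mem_nhds _ hε)
    refine ⟨s, fun t ht => ?_⟩
    apply hball
    rw [Metric.mem_ball, dist_zero_right]
    calc ‖∑ j ∈ t, S j ((y : ∀ n, Y n) j)‖
        ≤ ‖∑ j ∈ t, ‖(y : ∀ n, Y n) j‖ • B.z j‖ := (hS t _).1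
      _ < ε := by
          have := hs t ht
          rwa [Metric.mem_ball, dist_zero_right] at this
  refine ⟨{ toFun := fun y => ∑' n, S n ((y : ∀ n, Y n) n)
            map_add' := ?_, map_smul' := ?_ }, 1/D, by positivity, ?_⟩
  · intro y y'
    have h1 := hsum y
    have h2 := hsum y'
    rw [← Summable.tsum_add h1 h2]
    exact tsum_congr fun n => by
      have : ((y + y' : ↥(zsum B Y)) : ∀ n, Y n) n
          = (y : ∀ n, Y n) n + (y' : ∀ n, Y n) n := rfl
      rw [this, map_add]
  · intro c y
    have h2 := (hsum y).hasSum.const_smul c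
    have he : (fun n => c • S n ((y : ∀ n, Y n) n))
        = fun n => S n (((c • y : ↥(zsum B Y)) : ∀ n, Y n) n) := by
      funext n
      have : ((c • y : ↥(zsum B Y)) : ∀ n, Y n) n = c • (y : ∀ n, Y n) n := rfl
      rw [this, map_smul]
    rw [he] at h2
    exact h2.tsum_eq
  · intro y
    have h1 : HasSum (fun n => S n ((y : ∀ n, Y n) n))
        (∑' n, S n ((y : ∀ n, Y n) n)) := (hsum y).hasSum
    have hy : Summable fun n => ‖(y : ∀ n, Y n) n‖ • B.z n := y.2
    have h2 := hy.hasSum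
    have hub : ‖∑' n, S n ((y : ∀ n, Y n) n)‖ ≤ zsumNorm B y :=
      le_of_tendsto_of_tendsto' (Filter.Tendsto.norm h1) (Filter.Tendsto.norm h2)
        (fun F => (hS F _).1)
    have hlb : zsumNorm B y ≤ D * ‖∑' n, S n ((y : ∀ n, Y n) n)‖ :=
      le_of_tendsto_of_tendsto' (Filter.Tendsto.norm h2)
        ((Filter.Tendsto.norm h1).const_mul D) (fun F => (hS F _).2)
    constructor
    · have hd : zsumNorm B y / D ≤ ‖∑' n, S n ((y : ∀ n, Y n) n)‖ :=
        (div_le_iff₀ hD).mpr (by linarith)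
      calc 1 / D * zsumNorm B y = zsumNorm B y / D := one_div_mul_eq_div _ _
        _ ≤ _ := hd
    · calc ‖∑' n, S n ((y : ∀ n, Y n) n)‖ ≤ zsumNorm B y := hub
        _ = D * (1 / D) * zsumNorm B y := by
            rw [mul_one_div_cancel hD.ne', one_mul]

end Analytic
end ZsumAux

open ZsumAux Filter Topology

/-- **Theorem (index `ω₁` gives an embedding of the sum).** If `Z` has a normalized
`1`-unconditional basis, `X` and the `Y n` are separable Banach spaces, and `𝒯` is a
`(∑ Y n)_Z`-tree in `X` with constants `C`, `D` whose order is `ω₁` (i.e. all countable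
transfinite derivatives are nonempty), then `X` contains a subspace `D`-isomorphic to
`(∑ Y n)_Z`: there is a linear embedding `U` with
`c ‖y‖_Z ≤ ‖U y‖ ≤ D c ‖y‖_Z` for some `c > 0`. -/
theorem zsum_tree_of_index_omega1
    (Z : Type) [NormedAddCommGroup Z] [NormedSpace ℝ Z] [CompleteSpace Z]
    (B : NormalizedUncondBasis Z)
    (X : Type) [NormedAddCommGroup X] [NormedSpace ℝ X] [CompleteSpace X]
    [TopologicalSpace.SeparableSpace X]
    (Y : ℕ → Type) [∀ n, NormedAddCommGroup (Y n)] [∀ n, NormedSpace ℝ (Y n)]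
    [∀ n, CompleteSpace (Y n)] [∀ n, TopologicalSpace.SeparableSpace (Y n)]
    (C D : ℝ) (hC : 0 < C) (hD : 0 < D)
    (T : Set (TreeNode X Y))
    (hT_initial : ∀ a ∈ T, ∀ (k : ℕ) (h : k ≤ a.1),
      (⟨k, fun j => a.2 (Fin.castLE h j)⟩ : TreeNode X Y) ∈ T)
    (hT_good : ∀ a ∈ T, GoodNode B C D a)
    (hT_order : ∀ o : Ordinal, o.card ≤ Cardinal.aleph0 → (derivIter T o).Nonempty) :
    ∃ (U : ↥(zsum B Y) →ₗ[ℝ] X) (c : ℝ), 0 < c ∧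
      ∀ y : ↥(zsum B Y),
        c * zsumNorm B y ≤ ‖U y‖ ∧ ‖U y‖ ≤ D * c * zsumNorm B y := by
  classical
  -- dense sequences in X and the Y n
  obtain ⟨w, hw⟩ := TopologicalSpace.exists_dense_seq X
  choose q hqd using fun n => TopologicalSpace.exists_dense_seq (Y n)
  -- approximation selector
  have hφ : ∀ (x : X) (k : ℕ), ∃ i, dist x (w i) < (1/2 : ℝ)^k := fun x k =>
    hw.exists_dist_lt x (by positivity)
  choose φ hφs using hφ
  set ψ : TreeNode X Y → Code := codeOf φ q with hψdef
  -- nonemptiness of the derivatives of the countable code tree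
  have himg : ∀ o : Ordinal, o.card ≤ Cardinal.aleph0 →
      (gIter CodeLE (ψ '' T) o).Nonempty := by
    intro o ho
    obtain ⟨b, hb⟩ := hT_order o ho
    rw [derivIter_eq_gIter] at hb
    exact ⟨ψ b, gIter_image NodeLE T CodeLE ψ (fun a b h => codeOf_mono φ q h)
      (fun a b h hne => codeOf_ne φ q h hne) o ⟨b, hb, rfl⟩⟩
  -- stabilization of the code-tree derivatives
  obtain ⟨α, hαc, hstab⟩ := gIter_stab CodeLE (ψ '' T)
  set R := gIter CodeLE (ψ '' T) α with hRdef
  have hRne : R.Nonempty := himg α hαc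
  have hRstep : ∀ c ∈ R, ∃ d ∈ R, CodeLE c d ∧ c ≠ d := by
    intro c hc
    have h1 : c ∈ gOne CodeLE R := by
      rw [hRdef, ← gIter_succ, hstab]; exact hc
    exact h1.2
  -- build an infinite chain in R
  have step : ∀ c : {c // c ∈ R}, ∃ d : {c // c ∈ R}, CodeLE c.1 d.1 ∧ c.1 ≠ d.1 := by
    rintro ⟨c, hc⟩
    obtain ⟨d, hd, h1, h2⟩ := hRstep c hc
    exact ⟨⟨d, hd⟩, h1, h2⟩
  choose nxt hnxt1 hnxt2 using step
  set t : ℕ → {c // c ∈ R} := fun m => nxt^[m] ⟨hRne.choose, hRne.choose_spec⟩ with htdef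
  have htsucc : ∀ m, t (m+1) = nxt (t m) := fun m => Function.iterate_succ_apply' _ _ _
  have hmemT : ∀ m, (t m).1 ∈ ψ '' T := by
    intro m
    have h1 := gIter_antitone CodeLE (ψ '' T) (zero_le (a := α)) (t m).2
    rwa [gIter_zero] at h1
  -- decode the chain
  have hdec : ∀ m, ∃ b, b ∈ T ∧ ψ b = (t m).1 := fun m => hmemT m
  choose a ha hψa using hdec
  have hch1 : ∀ m, CodeLE (ψ (a m)) (ψ (a (m+1))) := by
    intro m; rw [hψa, hψa, htsucc]; exact hnxt1 (t m)
  have hchne : ∀ m, ψ (a m) ≠ ψ (a (m+1)) := by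
    intro m; rw [hψa, hψa, htsucc]; exact hnxt2 (t m)
  have hlt : ∀ m, (a m).1 < (a (m+1)).1 := fun m =>
    codeOf_len_lt φ q (hch1 m) (hchne m)
  have hmono : StrictMono fun m => (a m).1 := strictMono_nat_of_lt_succ hlt
  have hklt : ∀ m, m ≤ (a m).1 := fun m => hmono.le_apply
  have hch : ∀ m m', m ≤ m' → CodeLE (ψ (a m)) (ψ (a m')) := by
    intro m m' h
    induction h with
    | refl => exact CodeLE.rfl _
    | step h ih => exact CodeLE.trans ih (hch1 _)
  -- coherence of approximations along the chain
  have hcoh : ∀ m m', m ≤ m' → ∀ (ℓ j i : ℕ) (hℓ : ℓ < (a m).1)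
      (hj : j < ℓ+1) (hi : i < ℓ+1),
      φ (nodeOp (a m') j (q j i)) ℓ = φ (nodeOp (a m) j (q j i)) ℓ := by
    intro m m' h ℓ j i hℓ hj hi
    obtain ⟨hk, he⟩ := hch m m' h
    exact congrFun (congrFun (he ⟨ℓ, hℓ⟩) ⟨j, hj⟩) ⟨i, hi⟩
  -- Cauchyness on the dense sequences
  have hkey : ∀ (j i m n : ℕ), m ≤ n → j < (a m).1 → i < (a m).1 →
      dist (nodeOp (a m) j (q j i)) (nodeOp (a n) j (q j i))
        < 2 * (1/2 : ℝ)^((a m).1 - 1) := by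
    intro j i m n hmn hj hi
    set ℓ := (a m).1 - 1 with hℓdef
    have hℓ : ℓ < (a m).1 := by omega
    have hj' : j < ℓ + 1 := by omega
    have hi' : i < ℓ + 1 := by omega
    have e := hcoh m n hmn ℓ j i hℓ hj' hi'
    have d1 := hφs (nodeOp (a m) j (q j i)) ℓ
    have d2 := hφs (nodeOp (a n) j (q j i)) ℓ
    rw [e] at d2
    have htr := dist_triangle (nodeOp (a m) j (q j i))
      (w (φ (nodeOp (a m) j (q j i)) ℓ)) (nodeOp (a n) j (q j i))
    rw [dist_comm (w (φ (nodeOp (a m) j (q j i)) ℓ)) (nodeOp (a n) j (q j i))] at htr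
    linarith
  have hqc : ∀ j i, CauchySeq fun m => nodeOp (a m) j (q j i) := by
    intro j i
    rw [Metric.cauchySeq_iff]
    intro ε hε
    obtain ⟨K, hK⟩ := exists_pow_lt_of_lt_one (half_pos hε) (by norm_num : (1/2 : ℝ) < 1)
    refine ⟨max (max j i + 1) (K + 1), fun m hm n hn => ?_⟩
    have hbound : ∀ m' n' : ℕ, m' ≤ n' → max (max j i + 1) (K + 1) ≤ m' →
        dist (nodeOp (a m') j (q j i)) (nodeOp (a n') j (q j i)) < ε := by
      intro m' n' hmn hm'
      have hj : j < (a m').1 := by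
        have := hklt m'; omega
      have hi : i < (a m').1 := by
        have := hklt m'; omega
      have h1 := hkey j i m' n' hmn hj hi
      have h2 : ((1:ℝ)/2)^((a m').1 - 1) ≤ (1/2 : ℝ)^K := by
        apply pow_le_pow_of_le_one (by norm_num) (by norm_num)
        have := hklt m'; omega
      linarith
    rcases le_total m n with h | h
    · exact hbound m n h hm
    · rw [dist_comm]; exact hbound n m h hn
  -- limit operators
  have hlim : ∀ j, ∃ S : Y j →ₗ[ℝ] X,
      ∀ y, Tendsto (fun m => nodeOp (a m) j y) atTop (𝓝 (S y)) := fun j =>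
    lim_exists (fun m => nodeOp (a m) j)
      (fun m y => nodeOp_norm (hT_good (a m) (ha m)) j y) (q j) (hqd j) (hqc j)
  choose S hSlim using hlim
  -- the limit operators satisfy the two-sided estimate
  have hfin : ∀ (F : Finset ℕ) (y : ∀ n, Y n),
      ‖∑ j ∈ F, S j (y j)‖ ≤ ‖∑ j ∈ F, ‖y j‖ • B.z j‖ ∧
      ‖∑ j ∈ F, ‖y j‖ • B.z j‖ ≤ D * ‖∑ j ∈ F, S j (y j)‖ := by
    intro F y
    obtain ⟨M, hM⟩ := F.exists_le
    have hTs : Tendsto (fun m => ∑ j ∈ F, nodeOp (a m) j (y j)) atTop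
        (𝓝 (∑ j ∈ F, S j (y j))) := tendsto_finset_sum F (fun j _ => hSlim j (y j))
    have hev : ∀ m, M + 1 ≤ m → ∀ j ∈ F, j < (a m).1 := by
      intro m hm j hj
      have := hM j hj
      have := hklt m
      omega
    constructor
    · refine le_of_tendsto (Filter.Tendsto.norm hTs) ?_
      filter_upwards [eventually_ge_atTop (M+1)] with m hm
      exact (nodeOp_sum (hT_good (a m) (ha m)) F (hev m hm) y).1
    · refine ge_of_tendsto ((Filter.Tendsto.norm hTs).const_mul D) ?_
      filter_upwards [eventually_ge_atTop (M+1)] with m hm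
      exact (nodeOp_sum (hT_good (a m) (ha m)) F (hev m hm) y).2
  exact branch_embeds B hD S hfin
end

section
/- Let (x^α_n) be a standard basis of C₀(ω^α), let M ⊆ ℕ, and let φ : M → ℕ be injective. Then the two subsequences (x^α_i)_{i∈M} and (x^α_{φ(i)})_{i∈M} are 1-equivalent if and only if the map supp x^α_i ↦ supp x^α_{φ(i)} is an order isomorphism from {supp x^α_i : i ∈ M} onto {supp x^α_{φ(i)} : i ∈ M}, where both families of supports are partially ordered by set inclusion. -/
set_option synthInstance.maxHeartbeats 1000000
set_option maxHeartbeats 1000000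

noncomputable section

/-- The half-open ordinal interval `(p.1, p.2]`; the supports of standard basis
elements are such intervals. -/
def Iv (p : Ordinal × Ordinal) : Set Ordinal := Set.Ioc p.1 p.2

/-- Left endpoints of the pieces used at a limit stage: the pieces are
`(ω^{γ_{k-1}}, ω^{γ_k}]` with the convention `ω^{γ_0} = 0`. -/
def loPiece (g : ℕ → Ordinal) : ℕ → Ordinal
  | 0 => 0
  | (k + 1) => Ordinal.omega0 ^ g k

/-- `IsStdSupp α s` says that `s` enumerates the supports (half-open ordinal
intervals `(a,b]`, recorded as pairs `(a,b)`) of a standard basis of `C₀(ω^α)`: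
* for `α = 1` the supports are the singletons `{n} = (n-1, n]`, `1 ≤ n < ω`, in any order;
* for `α = γ + 1`, split `(0, ω^{γ+1}]` into the pieces `(ω^γ k, ω^γ (k+1)]`, `k ∈ ℕ`;
  on each piece put the translate of a standard basis of `C(ω^γ)` (the indicator of the
  whole piece followed by a translated standard basis of `C₀(ω^γ)`), and enumerate all
  these so that whenever one support is strictly contained in another, the one with the
  larger support comes first;
* for `α` a limit, fix `γ_k ↑ α`, split `(0, ω^α]` into the pieces
  `(ω^{γ_{k-1}}, ω^{γ_k}]`, place translated standard bases of `C(ω^{γ_k})` on them,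
  and enumerate by the same rule. -/
inductive IsStdSupp : Ordinal → (ℕ → Ordinal × Ordinal) → Prop
  | base (e : ℕ ≃ ℕ) : IsStdSupp 1 (fun n => ((e n : Ordinal), (e n : Ordinal) + 1))
  | succ (γ : Ordinal) (hγ : 1 ≤ γ) (t : ℕ → ℕ → Ordinal × Ordinal)
      (ht : ∀ k, IsStdSupp γ (t k))
      (s : ℕ → Ordinal × Ordinal) (hinj : Function.Injective s)
      (hrange : Set.range s = ⋃ k : ℕ,
        ({(Ordinal.omega0 ^ γ * (k : Ordinal), Ordinal.omega0 ^ γ * ((k : Ordinal) + 1))} ∪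
          {p | ∃ n, p = (Ordinal.omega0 ^ γ * (k : Ordinal) + (t k n).1,
                          Ordinal.omega0 ^ γ * (k : Ordinal) + (t k n).2)}))
      (horder : ∀ m n, Iv (s m) ⊂ Iv (s n) → n < m) :
      IsStdSupp (γ + 1) s
  | limit (α : Ordinal) (hα : Order.IsSuccLimit α) (g : ℕ → Ordinal) (hg : StrictMono g)
      (hglt : ∀ k, g k < α) (hcof : ∀ β < α, ∃ k, β ≤ g k)
      (t : ℕ → ℕ → Ordinal × Ordinal) (ht : ∀ k, IsStdSupp (g k) (t k))
      (s : ℕ → Ordinal × Ordinal) (hinj : Function.Injective s)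
      (hrange : Set.range s = ⋃ k : ℕ,
        ({(loPiece g k, Ordinal.omega0 ^ g k)} ∪
          {p | ∃ n, p = (loPiece g k + (t k n).1, loPiece g k + (t k n).2)}))
      (horder : ∀ m n, Iv (s m) ⊂ Iv (s n) → n < m) :
      IsStdSupp α s

lemma one_le_omega0_opow (α : Ordinal) : (1 : Ordinal) ≤ Ordinal.omega0 ^ α :=
  Order.one_le_iff_pos.mpr (Ordinal.opow_pos α Ordinal.omega0_pos)

/-- The compact ordinal interval `[1, β]` with its order topology. -/
abbrev IccO (β : Ordinal) := ↥(Set.Icc (1 : Ordinal) β)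

/-- The top point `ω^α` of the interval `[1, ω^α]`. -/
def topPt (α : Ordinal) : IccO (Ordinal.omega0 ^ α) :=
  ⟨Ordinal.omega0 ^ α, ⟨one_le_omega0_opow α, le_rfl⟩⟩

/-- `C₀(ω^α)`: the closed hyperplane of `C(ω^α) = C([1, ω^α], ℝ)` consisting of the
functions vanishing at `ω^α`. -/
def C0Sub (α : Ordinal) : Submodule ℝ C(IccO (Ordinal.omega0 ^ α), ℝ) where
  carrier := {f | f (topPt α) = 0}
  zero_mem' := rfl
  add_mem' := by
    intro a b ha hb
    simp only [Set.mem_setOf_eq, ContinuousMap.add_apply] at *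
    rw [ha, hb, add_zero]
  smul_mem' := by
    intro c f hf
    simp only [Set.mem_setOf_eq, ContinuousMap.smul_apply] at *
    rw [hf, smul_zero]

/-- The Banach space `C₀(ω^α)`. -/
abbrev C0Space (α : Ordinal) := ↥(C0Sub α)

set_option synthInstance.maxHeartbeats 1000000 in
instance instC0SpaceNormedAddCommGroup (α : Ordinal) : NormedAddCommGroup (C0Space α) :=
  inferInstance

set_option synthInstance.maxHeartbeats 1000000 in
instance instC0SpaceNormedSpace (α : Ordinal) : NormedSpace ℝ (C0Space α) :=
  inferInstance

/-- `x` is a standard basis of `C₀(ω^α)`: the `x n` are the indicator functions of a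
standard sequence of supports. -/
def IsStdBasisC0 (α : Ordinal) (x : ℕ → C0Space α) : Prop :=
  ∃ s : ℕ → Ordinal × Ordinal, IsStdSupp α s ∧
    ∀ (n : ℕ) (ρ : IccO (Ordinal.omega0 ^ α)),
      (x n : C(IccO (Ordinal.omega0 ^ α), ℝ)) ρ =
        Set.indicator (Iv (s n)) (fun _ => (1 : ℝ)) (ρ : Ordinal)

/-- Two sequences `u`, `v` are `C`-equivalent: there is a scaling constant `c > 0`
with `c ‖∑ a i • u i‖ ≤ ‖∑ a i • v i‖ ≤ C c ‖∑ a i • u i‖` for all finitely supported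
coefficients; equivalently the map `u i ↦ v i` extends to an isomorphism `S` of the
closed linear spans with `‖S‖ ‖S⁻¹‖ ≤ C`. -/
def SeqCEquiv {E F : Type*} [NormedAddCommGroup E] [NormedSpace ℝ E]
    [NormedAddCommGroup F] [NormedSpace ℝ F] (C : ℝ) (u : ℕ → E) (v : ℕ → F) : Prop :=
  ∃ c : ℝ, 0 < c ∧ ∀ (s : Finset ℕ) (a : ℕ → ℝ),
    c * ‖∑ i ∈ s, a i • u i‖ ≤ ‖∑ i ∈ s, a i • v i‖ ∧
    ‖∑ i ∈ s, a i • v i‖ ≤ C * c * ‖∑ i ∈ s, a i • u i‖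

/-- `(y n)` is a Schauder basis of `E`: every vector has a unique representation as a
norm convergent series `∑ a n • y n`. -/
def IsSchauderBasis {E : Type*} [NormedAddCommGroup E] [NormedSpace ℝ E]
    (y : ℕ → E) : Prop :=
  ∀ v : E, ∃! a : ℕ → ℝ,
    Filter.Tendsto (fun N => ∑ j ∈ Finset.range N, a j • y j) Filter.atTop (nhds v)


/-- `C`-equivalence of the families `(u i)_{i ∈ M}` and `(v i)_{i ∈ M}`. -/
def SeqCEquivOn {E F : Type*} [NormedAddCommGroup E] [NormedSpace ℝ E]
    [NormedAddCommGroup F] [NormedSpace ℝ F]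
    (C : ℝ) (M : Set ℕ) (u : ℕ → E) (v : ℕ → F) : Prop :=
  ∃ c : ℝ, 0 < c ∧ ∀ (s : Finset ℕ), ↑s ⊆ M → ∀ a : ℕ → ℝ,
    c * ‖∑ i ∈ s, a i • u i‖ ≤ ‖∑ i ∈ s, a i • v i‖ ∧
    ‖∑ i ∈ s, a i • v i‖ ≤ C * c * ‖∑ i ∈ s, a i • u i‖

/-! ### Auxiliary structural lemmas about standard supports -/

lemma aux_Iv_eq (p : Ordinal × Ordinal) : Iv p = Set.Ioc p.1 p.2 := rfl

lemma aux_Ioc_add_image (c a b : Ordinal) :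
    Set.Ioc (c + a) (c + b) = (c + ·) '' Set.Ioc a b := by
  ext y
  constructor
  · rintro ⟨h1, h2⟩
    have hc : c ≤ y := le_trans (le_self_add) h1.le
    refine ⟨y - c, ⟨?_, ?_⟩, Ordinal.add_sub_cancel_of_le hc⟩
    · rwa [← add_lt_add_iff_left c, Ordinal.add_sub_cancel_of_le hc]
    · rwa [← add_le_add_iff_left c, Ordinal.add_sub_cancel_of_le hc]
  · rintro ⟨z, ⟨h1, h2⟩, rfl⟩
    exact ⟨(add_lt_add_iff_left c).2 h1, (add_le_add_iff_left c).2 h2⟩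

/-- The structural facts about a family of standard supports that we need:
injectivity, nonemptiness of the supports, strict boundedness of the tops by `ω^α`,
the fact that the top determines the support, and laminarity. -/
def SuppGood (α : Ordinal) (s : ℕ → Ordinal × Ordinal) : Prop :=
  Function.Injective s ∧
  (∀ n, (s n).1 < (s n).2) ∧
  (∀ n, (s n).2 < Ordinal.omega0 ^ α) ∧
  (∀ m n, (s m).2 = (s n).2 → s m = s n) ∧
  (∀ m n, Iv (s m) ⊆ Iv (s n) ∨ Iv (s n) ⊆ Iv (s m) ∨ Disjoint (Iv (s m)) (Iv (s n)))

lemma suppGood_pieces (α : Ordinal) (c : ℕ → Ordinal) (hc : StrictMono c) (hc0 : c 0 = 0)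
    (hcα : ∀ k, c (k + 1) < Ordinal.omega0 ^ α)
    (t : ℕ → ℕ → Ordinal × Ordinal)
    (htA : ∀ k n, (t k n).1 < (t k n).2)
    (htB : ∀ k n, c k + (t k n).2 < c (k + 1))
    (htC : ∀ k m n, (t k m).2 = (t k n).2 → t k m = t k n)
    (htD : ∀ k m n, Iv (t k m) ⊆ Iv (t k n) ∨ Iv (t k n) ⊆ Iv (t k m) ∨
      Disjoint (Iv (t k m)) (Iv (t k n)))
    (s : ℕ → Ordinal × Ordinal) (hinj : Function.Injective s)
    (hrange : Set.range s = ⋃ k : ℕ, ({(c k, c (k + 1))} ∪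
        {p | ∃ n, p = (c k + (t k n).1, c k + (t k n).2)})) :
    SuppGood α s := by
  have hmem : ∀ n, ∃ k, s n = (c k, c (k + 1)) ∨
      ∃ m, s n = (c k + (t k m).1, c k + (t k m).2) := by
    intro n
    have h : s n ∈ Set.range s := ⟨n, rfl⟩
    rw [hrange] at h
    simpa [Set.mem_iUnion, Set.mem_union, Set.mem_setOf_eq] using h
  -- facts about an element of piece `k`
  have facts : ∀ (k : ℕ) (p : Ordinal × Ordinal),
      (p = (c k, c (k + 1)) ∨ ∃ m, p = (c k + (t k m).1, c k + (t k m).2)) →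
      p.1 < p.2 ∧ c k ≤ p.1 ∧ c k < p.2 ∧ p.2 ≤ c (k + 1) := by
    rintro k p (rfl | ⟨m, rfl⟩)
    · exact ⟨hc (Nat.lt_succ_self k), le_rfl, hc (Nat.lt_succ_self k), le_rfl⟩
    · have h2pos : 0 < (t k m).2 := lt_of_le_of_lt zero_le (htA k m)
      exact ⟨(add_lt_add_iff_left _).2 (htA k m), le_self_add,
        lt_of_lt_of_le (lt_add_of_pos_right _ h2pos) (le_of_eq rfl) |>.trans_le le_rfl,
        (htB k m).le⟩
  have hsub : ∀ (k : ℕ) (p : Ordinal × Ordinal),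
      (p = (c k, c (k + 1)) ∨ ∃ m, p = (c k + (t k m).1, c k + (t k m).2)) →
      Iv p ⊆ Set.Ioc (c k) (c (k + 1)) := by
    intro k p hp
    obtain ⟨_, h1, _, h2⟩ := facts k p hp
    exact Set.Ioc_subset_Ioc h1 h2
  have hdisj : ∀ k k' : ℕ, k < k' →
      Disjoint (Set.Ioc (c k) (c (k + 1))) (Set.Ioc (c k') (c (k' + 1))) := by
    intro k k' hkk'
    refine Set.disjoint_left.mpr fun z hz hz' => ?_
    exact absurd (lt_of_le_of_lt (hz.2.trans (hc.monotone hkk')) hz'.1) (lt_irrefl z)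
  refine ⟨hinj, ?_, ?_, ?_, ?_⟩
  · intro n
    obtain ⟨k, hk⟩ := hmem n
    exact (facts k _ hk).1
  · intro n
    obtain ⟨k, hk⟩ := hmem n
    exact lt_of_le_of_lt (facts k _ hk).2.2.2 (hcα k)
  · -- tops determine elements
    intro m n htop
    obtain ⟨k, hk⟩ := hmem m
    obtain ⟨k', hk'⟩ := hmem n
    have hfm := facts k _ hk
    have hfn := facts k' _ hk'
    have hkk' : k = k' := by
      by_contra hne
      rcases Nat.lt_or_ge k k' with h | h
      · have : (s m).2 ≤ c k' := (hfm.2.2.2).trans (hc.monotone h)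
        exact absurd (htop ▸ hfn.2.2.1) (not_lt_of_ge this)
      · have hlt : k' < k := lt_of_le_of_ne h (Ne.symm hne)
        have : (s n).2 ≤ c k := (hfn.2.2.2).trans (hc.monotone hlt)
        exact absurd (htop ▸ hfm.2.2.1) ((not_lt_of_ge (htop ▸ this)))
    subst hkk'
    rcases hk with hk | ⟨m', hk⟩ <;> rcases hk' with hk' | ⟨n', hk'⟩
    · rw [hk, hk']
    · exfalso
      have h1 : (s m).2 = c (k + 1) := by rw [hk]
      have h2 : (s n).2 = c k + (t k n').2 := by rw [hk']
      have := htB k n'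
      rw [← h2, ← htop, h1] at this
      exact lt_irrefl _ this
    · exfalso
      have h1 : (s n).2 = c (k + 1) := by rw [hk']
      have h2 : (s m).2 = c k + (t k m').2 := by rw [hk]
      have := htB k m'
      rw [← h2, htop, h1] at this
      exact lt_irrefl _ this
    · have h1 : c k + (t k m').2 = c k + (t k n').2 := by
        have e1 : (s m).2 = c k + (t k m').2 := by rw [hk]
        have e2 : (s n).2 = c k + (t k n').2 := by rw [hk']
        rw [← e1, ← e2, htop]
      have h2 : (t k m').2 = (t k n').2 := add_left_cancel h1
      have h3 := htC k m' n' h2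
      rw [hk, hk', h3]
  · -- laminarity
    intro m n
    obtain ⟨k, hk⟩ := hmem m
    obtain ⟨k', hk'⟩ := hmem n
    rcases Nat.lt_trichotomy k k' with h | h | h
    · exact Or.inr (Or.inr ((hdisj k k' h).mono (hsub k _ hk) (hsub k' _ hk')))
    · subst h
      rcases hk with hk | ⟨m', hk⟩ <;> rcases hk' with hk' | ⟨n', hk'⟩
      · left; rw [hk, hk']
      · right; left
        rw [hk]
        exact hsub k _ (Or.inr ⟨n', hk'⟩)
      · left
        rw [hk']
        exact hsub k _ (Or.inr ⟨m', hk⟩)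
      · have him : Iv (s m) = (c k + ·) '' Iv (t k m') := by
          rw [hk, aux_Iv_eq, aux_Iv_eq]
          exact aux_Ioc_add_image _ _ _
        have hin : Iv (s n) = (c k + ·) '' Iv (t k n') := by
          rw [hk', aux_Iv_eq, aux_Iv_eq]
          exact aux_Ioc_add_image _ _ _
        have hinjadd : Function.Injective (c k + ·) :=
          fun a b hab => add_left_cancel hab
        rcases htD k m' n' with h | h | h
        · exact Or.inl (by rw [him, hin]; exact Set.image_mono h)
        · exact Or.inr (Or.inl (by rw [him, hin]; exact Set.image_mono h))
        · exact Or.inr (Or.inr (by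
            rw [him, hin]
            exact (Set.disjoint_image_iff hinjadd).2 h))
    · exact Or.inr (Or.inr (((hdisj k' k h).mono (hsub k' _ hk') (hsub k _ hk)).symm))

lemma aux_Ioc_add_one (a : Ordinal) : Set.Ioc a (a + 1) = {a + 1} := by
  ext z
  simp only [Set.mem_Ioc, Set.mem_singleton_iff]
  constructor
  · rintro ⟨h1, h2⟩
    refine le_antisymm h2 ?_
    rw [Ordinal.add_one_eq_succ]
    exact Order.succ_le_iff.2 h1
  · rintro rfl
    exact ⟨lt_add_of_pos_right _ zero_lt_one, le_rfl⟩

lemma isStdSupp_suppGood {α : Ordinal} {s : ℕ → Ordinal × Ordinal}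
    (h : IsStdSupp α s) : SuppGood α s := by
  induction h with
  | base e =>
    refine ⟨?_, ?_, ?_, ?_, ?_⟩
    · intro a b hab
      have : (e a : Ordinal) = (e b : Ordinal) := congrArg Prod.fst hab
      exact e.injective (by exact_mod_cast this)
    · intro n
      exact lt_add_of_pos_right _ zero_lt_one
    · intro n
      show (e n : Ordinal) + 1 < Ordinal.omega0 ^ (1 : Ordinal)
      rw [Ordinal.opow_one]
      have : ((e n : Ordinal)) + 1 = ((e n + 1 : ℕ) : Ordinal) := by push_cast; ring
      rw [this]
      exact Ordinal.natCast_lt_omega0 _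
    · intro m n htop
      simp only at htop
      have h2 : e m + 1 = e n + 1 := by exact_mod_cast htop
      have h3 : e m = e n := by omega
      simp only [h3]
    · intro m n
      rcases eq_or_ne (e m) (e n) with h | h
      · left; simp only [h]; exact subset_rfl
      · right; right
        simp only [aux_Iv_eq, aux_Ioc_add_one]
        rw [Set.disjoint_singleton]
        intro hcon
        have hcon2 : e m + 1 = e n + 1 := by exact_mod_cast hcon
        exact h (by omega)
  | succ γ hγ t ht s hinj hrange horder ih =>
    refine suppGood_pieces (γ + 1) (fun k : ℕ => Ordinal.omega0 ^ γ * (k : Ordinal)) ?_ (by simp)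
      ?_ t (fun k n => (ih k).2.1 n) ?_ (fun k m n => (ih k).2.2.2.1 m n)
      (fun k m n => (ih k).2.2.2.2 m n) s hinj ?_
    · intro a b hab
      simp only
      rw [mul_lt_mul_iff_right₀ (Ordinal.opow_pos γ Ordinal.omega0_pos)]
      exact_mod_cast hab
    · intro k
      rw [Ordinal.opow_add, Ordinal.opow_one,
        mul_lt_mul_iff_right₀ (Ordinal.opow_pos γ Ordinal.omega0_pos)]
      exact Ordinal.natCast_lt_omega0 (k + 1)
    · intro k n
      have hckk : Ordinal.omega0 ^ γ * ((k + 1 : ℕ) : Ordinal) =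
          Ordinal.omega0 ^ γ * (k : Ordinal) + Ordinal.omega0 ^ γ := by
        push_cast
        rw [mul_add, mul_one]
      rw [hckk]
      exact (add_lt_add_iff_left _).2 ((ih k).2.2.1 n)
    · rw [hrange]
      push_cast
      rfl
  | limit α hα g hg hglt hcof t ht s hinj hrange horder ih =>
    have hlt : ∀ k, loPiece g k < Ordinal.omega0 ^ g k := by
      intro k
      cases k with
      | zero => exact Ordinal.opow_pos _ Ordinal.omega0_pos
      | succ k =>
        exact (Ordinal.opow_lt_opow_iff_right Ordinal.one_lt_omega0).2 (hg (Nat.lt_succ_self k))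
    refine suppGood_pieces α (loPiece g) ?_ rfl ?_ t (fun k n => (ih k).2.1 n) ?_
      (fun k m n => (ih k).2.2.2.1 m n) (fun k m n => (ih k).2.2.2.2 m n) s hinj ?_
    · refine strictMono_nat_of_lt_succ fun k => ?_
      show loPiece g k < Ordinal.omega0 ^ g k
      exact hlt k
    · intro k
      show Ordinal.omega0 ^ g k < Ordinal.omega0 ^ α
      exact (Ordinal.opow_lt_opow_iff_right Ordinal.one_lt_omega0).2 (hglt k)
    · intro k n
      show loPiece g k + (t k n).2 < Ordinal.omega0 ^ g k
      exact Ordinal.isPrincipal_add_omega0_opow (g k) (hlt k) ((ih k).2.2.1 n)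
    · exact hrange

lemma aux_top_mem_self {α : Ordinal} {s : ℕ → Ordinal × Ordinal} (hg : SuppGood α s)
    (m : ℕ) : (s m).2 ∈ Iv (s m) := ⟨hg.2.1 m, le_rfl⟩

lemma aux_top_mem_subset {α : Ordinal} {s : ℕ → Ordinal × Ordinal} (hg : SuppGood α s)
    {m n : ℕ} (hm : (s m).2 ∈ Iv (s n)) : Iv (s m) ⊆ Iv (s n) := by
  obtain ⟨hinj, hA, hB, hC, hD⟩ := hg
  rcases hD m n with h1 | h1 | h1
  · exact h1
  · have h2 := (Set.Ioc_subset_Ioc_iff (hA n)).1 h1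
    have h4 : s m = s n := hC _ _ (le_antisymm hm.2 h2.1)
    rw [h4]
  · exact absurd hm (Set.disjoint_left.1 h1 ⟨hA m, le_rfl⟩)

lemma aux_top_mem_Icc {α : Ordinal} {s : ℕ → Ordinal × Ordinal} (hg : SuppGood α s)
    (n : ℕ) : (s n).2 ∈ Set.Icc (1 : Ordinal) (Ordinal.omega0 ^ α) :=
  ⟨Order.one_le_iff_pos.2 (lt_of_le_of_lt zero_le (hg.2.1 n)), (hg.2.2.1 n).le⟩

section Analysis

open scoped Classical

variable {α : Ordinal} {s : ℕ → Ordinal × Ordinal} {x : ℕ → C0Space α}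
variable (hx : ∀ (n : ℕ) (ρ : IccO (Ordinal.omega0 ^ α)),
      (x n : C(IccO (Ordinal.omega0 ^ α), ℝ)) ρ =
        Set.indicator (Iv (s n)) (fun _ => (1 : ℝ)) (ρ : Ordinal))

lemma aux_norm_coe (v : C0Space α) : ‖v‖ = ‖(v : C(IccO (Ordinal.omega0 ^ α), ℝ))‖ := rfl

include hx in
lemma aux_sum_apply (T : Finset ℕ) (a : ℕ → ℝ) (ψ : ℕ → ℕ)
    (ρ : IccO (Ordinal.omega0 ^ α)) :
    ((∑ i ∈ T, a i • x (ψ i) : C0Space α) : C(IccO (Ordinal.omega0 ^ α), ℝ)) ρ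
      = ∑ i ∈ T, (if (ρ : Ordinal) ∈ Iv (s (ψ i)) then a i else 0) := by
  have hcoe : ((∑ i ∈ T, a i • x (ψ i) : C0Space α) : C(IccO (Ordinal.omega0 ^ α), ℝ))
      = ∑ i ∈ T, a i • (x (ψ i) : C(IccO (Ordinal.omega0 ^ α), ℝ)) := by
    simp [AddSubmonoidClass.coe_finset_sum]
  rw [hcoe, ContinuousMap.coe_sum, Finset.sum_apply]
  refine Finset.sum_congr rfl fun i _ => ?_
  rw [ContinuousMap.coe_smul, Pi.smul_apply, hx, smul_eq_mul, Set.indicator_apply]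
  split <;> simp

include hx in
lemma aux_norm_sum_le (hg : SuppGood α s) (T : Finset ℕ) (a : ℕ → ℝ) (ψ χ : ℕ → ℕ)
    (hiff : ∀ i ∈ T, ∀ j ∈ T,
      (Iv (s (ψ i)) ⊆ Iv (s (ψ j)) ↔ Iv (s (χ i)) ⊆ Iv (s (χ j)))) :
    ‖(∑ i ∈ T, a i • x (ψ i) : C0Space α)‖ ≤ ‖(∑ i ∈ T, a i • x (χ i) : C0Space α)‖ := by
  classical
  rw [aux_norm_coe, aux_norm_coe]
  refine (ContinuousMap.norm_le _ (norm_nonneg _)).2 fun ρ => ?_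
  by_cases hcase : ∀ i ∈ T, (ρ : Ordinal) ∉ Iv (s (ψ i))
  · have h0 : ((∑ i ∈ T, a i • x (ψ i) : C0Space α) :
        C(IccO (Ordinal.omega0 ^ α), ℝ)) ρ = 0 := by
      rw [aux_sum_apply hx]
      exact Finset.sum_eq_zero fun i hi => if_neg (hcase i hi)
    rw [h0]
    simpa using norm_nonneg _
  · push_neg at hcase
    obtain ⟨i₀, hi₀T, hi₀⟩ := hcase
    obtain ⟨i, hiF, hmin⟩ := (T.filter fun i => (ρ : Ordinal) ∈ Iv (s (ψ i))).exists_min_image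
      (fun i => (s (ψ i)).2) ⟨i₀, Finset.mem_filter.2 ⟨hi₀T, hi₀⟩⟩
    have hiT : i ∈ T := (Finset.mem_filter.1 hiF).1
    have hiρ : (ρ : Ordinal) ∈ Iv (s (ψ i)) := (Finset.mem_filter.1 hiF).2
    have key1 : ∀ j ∈ T, ((ρ : Ordinal) ∈ Iv (s (ψ j)) ↔ Iv (s (ψ i)) ⊆ Iv (s (ψ j))) := by
      intro j hj
      constructor
      · intro hρj
        rcases hg.2.2.2.2 (ψ i) (ψ j) with h1 | h1 | h1
        · exact h1
        · have h2 := (Set.Ioc_subset_Ioc_iff (hg.2.1 (ψ j))).1 h1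
          have h3 : (s (ψ i)).2 ≤ (s (ψ j)).2 := hmin j (Finset.mem_filter.2 ⟨hj, hρj⟩)
          have h4 : s (ψ i) = s (ψ j) := hg.2.2.2.1 _ _ (le_antisymm h3 h2.1)
          rw [h4]
        · exact absurd hiρ (Set.disjoint_right.1 h1 hρj)
      · intro hsub
        exact hsub hiρ
    set σ : IccO (Ordinal.omega0 ^ α) := ⟨(s (χ i)).2, aux_top_mem_Icc hg (χ i)⟩ with hσ
    have key2 : ∀ j ∈ T, ((σ : Ordinal) ∈ Iv (s (χ j)) ↔ Iv (s (χ i)) ⊆ Iv (s (χ j))) := by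
      intro j hj
      constructor
      · intro hm
        exact aux_top_mem_subset hg hm
      · intro hsub
        exact hsub (aux_top_mem_self hg (χ i))
    have heval : ((∑ i ∈ T, a i • x (ψ i) : C0Space α) :
        C(IccO (Ordinal.omega0 ^ α), ℝ)) ρ =
        ((∑ i ∈ T, a i • x (χ i) : C0Space α) : C(IccO (Ordinal.omega0 ^ α), ℝ)) σ := by
      rw [aux_sum_apply hx, aux_sum_apply hx]
      refine Finset.sum_congr rfl fun j hj => ?_
      refine if_congr ?_ rfl rfl
      rw [key1 j hj, hiff i hiT j hj, key2 j hj]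
    rw [heval]
    exact ContinuousMap.norm_coe_le_norm _ σ

include hx in
lemma aux_norm_x_one (hg : SuppGood α s) (n : ℕ) : ‖x n‖ = 1 := by
  rw [aux_norm_coe]
  refine le_antisymm ((ContinuousMap.norm_le _ zero_le_one).2 fun ρ => ?_) ?_
  · rw [hx, Set.indicator_apply]
    split <;> simp
  · have h := ContinuousMap.norm_coe_le_norm (x n : C(IccO (Ordinal.omega0 ^ α), ℝ))
      ⟨(s n).2, aux_top_mem_Icc hg n⟩
    rw [hx, Set.indicator_of_mem (aux_top_mem_self hg n)] at h
    simpa using h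
    
include hx in
lemma aux_pair_apply (u v : ℕ) (p q : ℝ) (ρ : IccO (Ordinal.omega0 ^ α)) :
    ((p • x u + q • x v : C0Space α) : C(IccO (Ordinal.omega0 ^ α), ℝ)) ρ =
      (if (ρ : Ordinal) ∈ Iv (s u) then p else 0) +
        (if (ρ : Ordinal) ∈ Iv (s v) then q else 0) := by
  have hcoe : ((p • x u + q • x v : C0Space α) : C(IccO (Ordinal.omega0 ^ α), ℝ))
      = p • (x u : C(IccO (Ordinal.omega0 ^ α), ℝ)) + q • (x v : _) := by
    simp
  rw [hcoe, ContinuousMap.add_apply, ContinuousMap.coe_smul, ContinuousMap.coe_smul,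
    Pi.smul_apply, Pi.smul_apply, hx, hx, smul_eq_mul, smul_eq_mul,
    Set.indicator_apply, Set.indicator_apply]
  split <;> split <;> simp

include hx in
lemma aux_pair_norm_le_one (hg : SuppGood α s) {u v : ℕ} (hsub : Iv (s u) ⊆ Iv (s v)) :
    ‖((2 : ℝ) • x u + (-1 : ℝ) • x v : C0Space α)‖ ≤ 1 := by
  rw [aux_norm_coe]
  refine (ContinuousMap.norm_le _ zero_le_one).2 fun ρ => ?_
  rw [aux_pair_apply hx]
  split_ifs with h1 h2 h3
  · norm_num
  · exact absurd (hsub h1) h2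
  · norm_num
  · norm_num

include hx in
lemma aux_pair_norm_ge_two (hg : SuppGood α s) {u v : ℕ} (hnm : (s u).2 ∉ Iv (s v)) :
    (2 : ℝ) ≤ ‖((2 : ℝ) • x u + (-1 : ℝ) • x v : C0Space α)‖ := by
  rw [aux_norm_coe]
  have h := ContinuousMap.norm_coe_le_norm
    (((2 : ℝ) • x u + (-1 : ℝ) • x v : C0Space α) : C(IccO (Ordinal.omega0 ^ α), ℝ))
    ⟨(s u).2, aux_top_mem_Icc hg u⟩
  rw [aux_pair_apply hx] at h
  rw [if_pos (aux_top_mem_self hg u), if_neg hnm] at h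
  calc (2 : ℝ) = ‖(2 : ℝ) + 0‖ := by norm_num
  _ ≤ _ := h

end Analysis

/-- Two subsequences `(x i)_{i ∈ M}` and `(x (φ i))_{i ∈ M}` of a standard basis of
`C₀(ω^α)` are `1`-equivalent iff `φ` induces an order isomorphism between the
corresponding families of supports, partially ordered by inclusion. -/
theorem stdBasis_subsequences_one_equivalent_iff
    (α : Ordinal) (s : ℕ → Ordinal × Ordinal) (hs : IsStdSupp α s)
    (x : ℕ → C0Space α)
    (hx : ∀ (n : ℕ) (ρ : IccO (Ordinal.omega0 ^ α)),
      (x n : C(IccO (Ordinal.omega0 ^ α), ℝ)) ρ =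
        Set.indicator (Iv (s n)) (fun _ => (1 : ℝ)) (ρ : Ordinal))
    (M : Set ℕ) (φ : ℕ → ℕ) (hφ : Set.InjOn φ M) :
    SeqCEquivOn 1 M x (fun i => x (φ i)) ↔
      ∀ i ∈ M, ∀ j ∈ M, (Iv (s i) ⊆ Iv (s j) ↔ Iv (s (φ i)) ⊆ Iv (s (φ j))) := by
  have hg : SuppGood α s := isStdSupp_suppGood hs
  constructor
  · rintro ⟨c, hcpos, hC⟩ i hi j hj
    -- first derive `c = 1` from the singleton `{i}`
    have hsing := hC {i} (by simpa using hi) (fun _ => (1 : ℝ))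
    simp only [Finset.sum_singleton, one_smul] at hsing
    rw [aux_norm_x_one hx hg i, aux_norm_x_one hx hg (φ i)] at hsing
    norm_num at hsing
    have hc1 : c = 1 := le_antisymm hsing.1 hsing.2
    subst hc1
    rcases eq_or_ne i j with rfl | hne
    · simp
    set a2 : ℕ → ℝ := fun n => if n = i then 2 else -1 with ha2
    have ha2i : a2 i = 2 := if_pos rfl
    have ha2j : a2 j = -1 := if_neg (Ne.symm hne)
    have hTM : ↑({i, j} : Finset ℕ) ⊆ M := by
      rw [Finset.coe_insert, Finset.coe_singleton]
      exact Set.insert_subset_iff.2 ⟨hi, Set.singleton_subset_iff.2 hj⟩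
    have hpair := hC {i, j} hTM a2
    have e1 : (∑ n ∈ ({i, j} : Finset ℕ), a2 n • x n) = (2 : ℝ) • x i + (-1 : ℝ) • x j := by
      rw [Finset.sum_pair hne, ha2i, ha2j]
    have e2 : (∑ n ∈ ({i, j} : Finset ℕ), a2 n • (fun m => x (φ m)) n)
        = (2 : ℝ) • x (φ i) + (-1 : ℝ) • x (φ j) := by
      rw [Finset.sum_pair hne, ha2i, ha2j]
    rw [e1, e2] at hpair
    constructor
    · intro hij
      by_contra hns
      have hnm : (s (φ i)).2 ∉ Iv (s (φ j)) := fun hm => hns (aux_top_mem_subset hg hm)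
      have h1 := aux_pair_norm_le_one hx hg hij
      have h2 := aux_pair_norm_ge_two hx hg hnm
      linarith [hpair.2]
    · intro hij
      by_contra hns
      have hnm : (s i).2 ∉ Iv (s j) := fun hm => hns (aux_top_mem_subset hg hm)
      have h1 := aux_pair_norm_le_one hx hg hij
      have h2 := aux_pair_norm_ge_two hx hg hnm
      linarith [hpair.1]
  · intro hiff
    refine ⟨1, one_pos, fun T hT a => ?_⟩
    have hiff' : ∀ i ∈ T, ∀ j ∈ T,
        (Iv (s i) ⊆ Iv (s j) ↔ Iv (s (φ i)) ⊆ Iv (s (φ j))) :=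
      fun i hi j hj => hiff i (hT (Finset.mem_coe.2 hi)) j (hT (Finset.mem_coe.2 hj))
    have h1 : ‖∑ i ∈ T, a i • x i‖ ≤ ‖∑ i ∈ T, a i • x (φ i)‖ :=
      aux_norm_sum_le hx hg T a (fun i => i) φ (fun i hi j hj => hiff' i hi j hj)
    have h2 : ‖∑ i ∈ T, a i • x (φ i)‖ ≤ ‖∑ i ∈ T, a i • x i‖ :=
      aux_norm_sum_le hx hg T a φ (fun i => i) (fun i hi j hj => (hiff' i hi j hj).symm)
    have e2 : (∑ i ∈ T, a i • (fun m => x (φ m)) i) = ∑ i ∈ T, a i • x (φ i) := rfl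
    rw [e2]
    constructor <;> [linarith; linarith]

end
end
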